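/- Let k ≥ 4, let r ≥ k − 3, let B ≥ 1, and set m = (8B+6)·2^r. Then for every integer j with m − (2^k − 1)·2^{r−k+3} ≤ j ≤ m, one has ν₂( C( 2m − (2^k − 1)·2^{r−k+3} , j ) ) ≥ α(B). -/

import Mathlib

open Finset

private lemma sum_digits_two_eq : ∀ (L B : ℕ), B < 2 ^ L →
    (Nat.digits 2 B).sum = ∑ i ∈ Finset.range L, (if B.testBit i then 1 else 0) := by
  intro L
  induction L with
  | zero => intro B hB; interval_cases B <;> simp
  | succ L ih =>
    intro B hB
    rcases Nat.eq_zero_or_pos B with rfl | hpos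
    · simp [Nat.testBit]
    · rw [Nat.digits_def' (by norm_num : 1 < 2) hpos, List.sum_cons,
        Finset.sum_range_succ']
      have h2 : B / 2 < 2 ^ L := by
        have h3 : B < 2 * 2 ^ L := by rw [← pow_succ']; exact hB
        omega
      simp only [Nat.testBit_succ]
      rw [ih (B / 2) h2]
      have hbit0 : (if B.testBit 0 then 1 else 0) = B % 2 := by
        rcases Nat.mod_two_eq_zero_or_one B with h | h <;>
          simp [Nat.testBit_zero, h]
      rw [hbit0]
      omega

theorem stmt8 (k r B : ℕ) (hk : 4 ≤ k) (hr : k - 3 ≤ r) (hB : 1 ≤ B)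
    (m : ℕ) (hm : m = (8 * B + 6) * 2 ^ r)
    (j : ℕ) (hj1 : m - (2 ^ k - 1) * 2 ^ (r - (k - 3)) ≤ j) (hj2 : j ≤ m) :
    (Nat.digits 2 B).sum ≤
      padicValNat 2 (Nat.choose (2 * m - (2 ^ k - 1) * 2 ^ (r - (k - 3))) j) := by
  obtain ⟨K, rfl⟩ : ∃ K, k = K + 4 := ⟨k - 4, by omega⟩
  obtain ⟨t, rfl⟩ : ∃ t, r = K + 1 + t := ⟨r - (K + 1), by omega⟩
  subst hm
  have e1 : K + 4 - 3 = K + 1 := by omega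
  have e2 : K + 1 + t - (K + 1) = t := by omega
  rw [e1, e2] at hj1 ⊢
  have p1 : (2:ℕ) ^ (K + 1 + t) = 2 ^ t * 2 ^ K * 2 := by
    rw [pow_add, pow_add]; ring
  have p2 : ((2:ℕ) ^ (K + 4) - 1) * 2 ^ t = 2 ^ t * 2 ^ K * 16 - 2 ^ t := by
    have q : (2:ℕ) ^ (K + 4) * 2 ^ t = 2 ^ t * 2 ^ K * 16 := by
      rw [pow_add]; ring
    rw [Nat.sub_mul, one_mul, q]
  rw [p1, p2] at hj1 ⊢
  rw [p1] at hj2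
  obtain ⟨a, ha⟩ : ∃ a, (2:ℕ) ^ t = a := ⟨_, rfl⟩
  obtain ⟨u, hu⟩ : ∃ u, (2:ℕ) ^ K = u := ⟨_, rfl⟩
  have ha1 : 1 ≤ a := ha ▸ Nat.one_le_two_pow
  have hu1 : 1 ≤ u := hu ▸ Nat.one_le_two_pow
  rw [ha, hu] at hj1 hj2 ⊢
  obtain ⟨w, hw⟩ : ∃ w, a * u = w := ⟨_, rfl⟩
  rw [hw] at hj1 hj2 ⊢
  have hw1 : 1 ≤ w := by rw [← hw]; exact Nat.one_le_iff_ne_zero.mpr (by positivity)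
  have haw : a ≤ w := by rw [← hw]; exact Nat.le_mul_of_pos_right a hu1
  have hwB1 : w ≤ w * B := Nat.le_mul_of_pos_right w hB
  have hMeq : (8 * B + 6) * (w * 2) = 16 * (w * B) + 12 * w := by ring
  have hne : 2 * ((8 * B + 6) * (w * 2)) - (w * 16 - a) = 32 * (w * B) + 8 * w + a := by
    omega
  rw [hne]
  have hjn : j ≤ 32 * (w * B) + 8 * w + a := by omega
  have hn0 : 32 * (w * B) + 8 * w + a ≠ 0 := by omega
  rw [padicValNat_choose hjn (Nat.lt_succ_self (Nat.log 2 (32 * (w * B) + 8 * w + a)))]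
  rw [sum_digits_two_eq B B (Nat.lt_two_pow_self (n := B))]
  rw [show (∑ i ∈ Finset.range B, if B.testBit i then 1 else 0) =
      ((Finset.range B).filter (fun i => B.testBit i)).card from
    (Finset.card_filter _ _).symm]
  apply Finset.card_le_card_of_injOn (fun b => t + K + 5 + b)
  · intro b hbmem
    rw [Finset.mem_coe, Finset.mem_filter, Finset.mem_range] at hbmem
    obtain ⟨hbB, hbit⟩ := hbmem
    have hdiv : B / 2 ^ b % 2 = 1 := by
      simpa [Nat.testBit_eq_decide_div_mod_eq] using hbit
    obtain ⟨v, hv⟩ : ∃ v, (2:ℕ) ^ b = v := ⟨_, rfl⟩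
    have hv1 : 1 ≤ v := hv ▸ Nat.one_le_two_pow
    rw [hv] at hdiv
    obtain ⟨d, hd⟩ : ∃ d, B / v = d := ⟨_, rfl⟩
    obtain ⟨c, hc⟩ : ∃ c, B % v = c := ⟨_, rfl⟩
    rw [hd] at hdiv
    obtain ⟨q, hq⟩ : ∃ q, d / 2 = q := ⟨_, rfl⟩
    have hd2 := Nat.div_add_mod d 2
    rw [hq] at hd2
    have hdq : d = 2 * q + 1 := by omega
    have hvB : v ≤ B := by
      have h1 : 1 ≤ B / v := by rw [hd]; omega
      exact (Nat.one_le_div_iff (by omega)).mp h1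
    have hcv : c < v := by rw [← hc]; exact Nat.mod_lt _ (by omega)
    have hqB : B = 2 * v * q + v + c := by
      have h0 := Nat.div_add_mod B v
      rw [hd, hc, hdq] at h0
      rw [← h0]; ring
    have h2I : (2:ℕ) ^ (t + K + 5 + b) = 32 * (w * v) := by
      rw [← hw, ← ha, ← hu, ← hv, pow_add, pow_add, pow_add]; ring
    have hZY : w * c + w ≤ w * v := by
      have h1 : w * c + w = w * (c + 1) := by ring
      have h2 : w * (c + 1) ≤ w * v := Nat.mul_le_mul_left w (by omega)
      omega
    have hwB : w * B = 2 * ((w * v) * q) + w * v + w * c := by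
      rw [hqB]; ring
    have hnq : 32 * (w * B) + 8 * w + a
        = (32 * (w * v)) * (2 * q + 1) + (32 * (w * c) + 8 * w + a) := by
      rw [hqB]; ring
    have hrem1 : 32 * (w * c) + 8 * w + a < 32 * (w * v) := by omega
    have hnM : (32 * (w * B) + 8 * w + a) % (32 * (w * v))
        = 32 * (w * c) + 8 * w + a := by
      rw [hnq, Nat.mul_add_mod, Nat.mod_eq_of_lt hrem1]
    have hjlow : 16 * (w * B) + a ≤ j + 4 * w := by omega
    have hjhigh : j ≤ 16 * (w * B) + 12 * w := by omega
    have hjq : j = 32 * ((w * v) * q) + (j - 32 * ((w * v) * q)) := by omega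
    have hjrem : j - 32 * ((w * v) * q) < 32 * (w * v) := by omega
    have hjq2 : j = (32 * (w * v)) * q + (j - 32 * ((w * v) * q)) := by
      rw [mul_assoc 32 (w * v) q]; exact hjq
    have hjM : j % (32 * (w * v)) = j - 32 * ((w * v) * q) := by
      conv_lhs => rw [hjq2]
      rw [Nat.mul_add_mod, Nat.mod_eq_of_lt hjrem]
    have hlt : (32 * (w * B) + 8 * w + a) % (32 * (w * v)) < j % (32 * (w * v)) := by
      rw [hnM, hjM]; omega
    -- membership
    beta_reduce
    rw [Finset.mem_coe, Finset.mem_filter, Finset.mem_Ico]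
    have hIlog : t + K + 5 + b ≤ Nat.log 2 (32 * (w * B) + 8 * w + a) := by
      rw [Nat.le_log_iff_pow_le (by norm_num) hn0, h2I]
      have h1 : w * v ≤ w * B := Nat.mul_le_mul_left w hvB
      omega
    refine ⟨⟨by omega, by omega⟩, ?_⟩
    show 2 ^ (t + K + 5 + b) ≤ j % 2 ^ (t + K + 5 + b)
        + ((32 * (w * B) + 8 * w + a) - j) % 2 ^ (t + K + 5 + b)
    rw [h2I]
    by_contra hcon
    push_neg at hcon
    have h3 : (j + ((32 * (w * B) + 8 * w + a) - j)) % (32 * (w * v))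
        = (32 * (w * B) + 8 * w + a) % (32 * (w * v)) := by
      rw [Nat.add_sub_cancel' hjn]
    rw [Nat.add_mod, Nat.mod_eq_of_lt hcon] at h3
    have h5 : j % (32 * (w * v)) ≤ (32 * (w * B) + 8 * w + a) % (32 * (w * v)) := by
      rw [← h3]; exact Nat.le_add_right _ _
    exact absurd h5 (Nat.not_le.mpr hlt)
  · intro x _ y _ hxy
    simpa using hxy
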